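/- Let p be a prime and k ≥ 1. The family 𝓕_{k−1} consisting of the constant function 1 together with all functions (ℤ_p)^k → ℂ of the form x ↦ (α_1 x_1 ⊕ ... ⊕ α_ℓ x_ℓ ⊕ x_{ℓ+1} ⊕ β) for 0 ≤ ℓ ≤ k−1, α_i ∈ ℤ_p, β ∈ {0,...,p−2} (values interpreted as complex numbers via the representatives {0,...,p−1}) is linearly independent over ℂ, and hence forms a basis of the p^k-dimensional space of functions from (ℤ_p)^k to ℂ. -/

import Mathlib

open Finset

section Aux
variable (p : ℕ) [Fact p.Prime]

noncomputable def zzST10 : ℂ := Complex.exp (2 * Real.pi * Complex.I / p)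

lemma zzST10_prim : IsPrimitiveRoot (zzST10 p) p :=
  Complex.isPrimitiveRoot_exp p (Fact.out (p := p.Prime)).ne_zero

noncomputable def eeST10 (s : ZMod p) : ℂ := zzST10 p ^ s.val

lemma zzST10_pow_mod (n : ℕ) : zzST10 p ^ (n % p) = zzST10 p ^ n := by
  conv_rhs => rw [← Nat.mod_add_div n p, pow_add, pow_mul, (zzST10_prim p).pow_eq_one,
    one_pow, mul_one]

lemma eeST10_add (s t : ZMod p) : eeST10 p (s + t) = eeST10 p s * eeST10 p t := by
  have : NeZero p := ⟨(Fact.out (p := p.Prime)).ne_zero⟩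
  rw [eeST10, eeST10, eeST10, ZMod.val_add, zzST10_pow_mod, pow_add]

lemma eeST10_zero : eeST10 p 0 = 1 := by
  have : NeZero p := ⟨(Fact.out (p := p.Prime)).ne_zero⟩
  simp [eeST10, ZMod.val_zero]

lemma eeST10_sum {ι : Type*} (s : Finset ι) (f : ι → ZMod p) :
    eeST10 p (∑ i ∈ s, f i) = ∏ i ∈ s, eeST10 p (f i) := by
  classical
  induction s using Finset.induction with
  | empty => simp [eeST10_zero]
  | @insert a s h ih => rw [Finset.sum_insert h, Finset.prod_insert h, eeST10_add, ih]

lemma sum_eeST10 (s : ZMod p) :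
    ∑ t : ZMod p, eeST10 p (t * s) = if s = 0 then (p : ℂ) else 0 := by
  have : NeZero p := ⟨(Fact.out (p := p.Prime)).ne_zero⟩
  split_ifs with h
  · simp [h, eeST10_zero, Finset.card_univ, ZMod.card]
  · have h1 : ∑ t : ZMod p, eeST10 p (t * s) = ∑ t : ZMod p, eeST10 p t :=
      Fintype.sum_equiv (Equiv.mulRight₀ s h) _ _ (fun t => rfl)
    have h2 : ∑ t : ZMod p, eeST10 p t = ∑ i ∈ range p, zzST10 p ^ i := by
      apply Finset.sum_nbij' (i := fun t : ZMod p => t.val) (j := fun n : ℕ => (n : ZMod p)) <;>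
        simp [ZMod.val_lt, ZMod.val_cast_of_lt, ZMod.natCast_val, ZMod.val_injective, eeST10]
      exact fun a ha => Nat.mod_eq_of_lt ha
    rw [h1, h2, (zzST10_prim p).geom_sum_eq_zero (Fact.out (p := p.Prime)).one_lt]

def S1ST10 : Set (ZMod p → ℂ) :=
  {g | g = fun _ => (1 : ℂ)} ∪
    {g | ∃ β : ZMod p, β.val < p - 1 ∧ g = fun t => (((t + β).val : ℕ) : ℂ)}

lemma fmemST10 (β : ZMod p) :
    (fun t : ZMod p => (((t + β).val : ℕ) : ℂ)) ∈ Submodule.span ℂ (S1ST10 p) := by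
  have hp1 : 1 < p := (Fact.out (p := p.Prime)).one_lt
  have : NeZero p := ⟨(Fact.out (p := p.Prime)).ne_zero⟩
  by_cases h : β.val < p - 1
  · exact Submodule.subset_span (Or.inr ⟨β, h, rfl⟩)
  · have hβ : β.val = p - 1 := le_antisymm (by have := β.val_lt; omega) (le_of_not_gt h)
    have hsum : ∀ t : ZMod p,
        ∑ β' : ZMod p, (((t + β').val : ℕ) : ℂ) = ∑ s : ZMod p, ((s.val : ℕ) : ℂ) :=
      fun t => Fintype.sum_equiv (Equiv.addLeft t) _ _ (fun β' => rfl)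
    have key : (fun t : ZMod p => (((t + β).val : ℕ) : ℂ)) =
        (fun _ : ZMod p => (∑ s : ZMod p, ((s.val : ℕ) : ℂ))) -
          ∑ β' ∈ univ.erase β, (fun t : ZMod p => (((t + β').val : ℕ) : ℂ)) := by
      funext t
      have := hsum t
      rw [← Finset.add_sum_erase _ _ (mem_univ β)] at this
      simp only [Pi.sub_apply, Finset.sum_apply]
      linear_combination this
    rw [key]
    apply Submodule.sub_mem
    · have h1 : (fun _ : ZMod p => (1 : ℂ)) ∈ Submodule.span ℂ (S1ST10 p) :=
        Submodule.subset_span (Or.inl rfl)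
      have h2 : (fun _ : ZMod p => (∑ s : ZMod p, ((s.val : ℕ) : ℂ))) =
          (∑ s : ZMod p, ((s.val : ℕ) : ℂ)) • (fun _ : ZMod p => (1 : ℂ)) := by
        funext t; simp
      rw [h2]; exact Submodule.smul_mem _ _ h1
    · apply Submodule.sum_mem
      intro β' hβ'
      have hne : β' ≠ β := (Finset.mem_erase.mp hβ').1
      have : β'.val < p - 1 := by
        rcases lt_or_eq_of_le (Nat.le_of_lt_succ (by have := β'.val_lt; omega) :
            β'.val ≤ p - 1) with h' | h'
        · exact h'
        · exact absurd (ZMod.val_injective p (h'.trans hβ.symm)) hne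
      exact Submodule.subset_span (Or.inr ⟨β', this, rfl⟩)

lemma deltaST10_mem (c : ZMod p) :
    (fun t : ZMod p => if t = c then (p : ℂ) else 0) ∈ Submodule.span ℂ (S1ST10 p) := by
  have hp1 : 1 < p := (Fact.out (p := p.Prime)).one_lt
  have : NeZero p := ⟨(Fact.out (p := p.Prime)).ne_zero⟩
  have key : (fun t : ZMod p => if t = c then (p : ℂ) else 0) =
      (fun t => (((t + (-1 - c)).val : ℕ) : ℂ)) - (fun t => (((t + (-c)).val : ℕ) : ℂ)) +
        (fun _ => (1 : ℂ)) := by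
    funext t
    simp only [Pi.add_apply, Pi.sub_apply]
    by_cases ht : t = c
    · subst ht
      have e1 : t + (-1 - t) = (-1 : ZMod p) := by ring
      have e2 : t + (-t) = (0 : ZMod p) := by ring
      have hneg : (-1 : ZMod p) = ((p - 1 : ℕ) : ZMod p) := by
        have : ((p : ℕ) : ZMod p) = 0 := ZMod.natCast_self p
        push_cast [Nat.cast_sub hp1.le]
        rw [this]; ring
      have hval : (-1 : ZMod p).val = p - 1 := by
        rw [hneg, ZMod.val_cast_of_lt (by omega)]
      rw [e1, e2, if_pos rfl, hval, ZMod.val_zero]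
      push_cast [Nat.cast_sub hp1.le]
      ring
    · rw [if_neg ht]
      set s : ZMod p := t - c with hs
      have e1 : t + (-1 - c) = s - 1 := by rw [hs]; ring
      have e2 : t + (-c) = s := by rw [hs]; ring
      have hs0 : s ≠ 0 := sub_ne_zero.mpr ht
      have hv1 : 1 ≤ s.val := by
        rcases Nat.eq_zero_or_pos s.val with h | h
        · exact absurd ((ZMod.val_eq_zero s).mp h) hs0
        · exact h
      have hsub : s - 1 = ((s.val - 1 : ℕ) : ZMod p) := by
        push_cast [Nat.cast_sub hv1]
        rw [ZMod.natCast_val, ZMod.cast_id]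
      have hval : (s - 1).val = s.val - 1 := by
        rw [hsub, ZMod.val_cast_of_lt (by have := s.val_lt; omega)]
      rw [e1, e2, hval]
      have : ((s.val - 1 : ℕ) : ℂ) = (s.val : ℂ) - 1 := by
        push_cast [Nat.cast_sub hv1]; ring
      rw [this]; ring
  rw [key]
  exact Submodule.add_mem _ (Submodule.sub_mem _ (fmemST10 p _) (fmemST10 p _))
    (Submodule.subset_span (Or.inl rfl))

lemma span_S1ST10 (h : ZMod p → ℂ) : h ∈ Submodule.span ℂ (S1ST10 p) := by
  have hp0 : (p : ℂ) ≠ 0 := Nat.cast_ne_zero.mpr (Fact.out (p := p.Prime)).ne_zero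
  have key : h = ∑ c : ZMod p, (h c / p) • (fun t : ZMod p => if t = c then (p : ℂ) else 0) := by
    funext t
    simp only [Finset.sum_apply, Pi.smul_apply, smul_eq_mul, mul_ite, mul_zero]
    rw [Finset.sum_ite_eq univ t (fun c => h c / p * p), if_pos (mem_univ t),
      div_mul_cancel₀ _ hp0]
  rw [key]
  exact Submodule.sum_mem _ fun c _ => Submodule.smul_mem _ _ (deltaST10_mem p c)

theorem sum_Iio_finST10 {M : Type*} [AddCommMonoid M] {k : ℕ} (ℓ : Fin k) (f : Fin k → M) :
    ∑ i ∈ Iio ℓ, f i = ∑ i : Fin ℓ.val, f (Fin.castLE ℓ.isLt.le i) := by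
  apply Finset.sum_bij' (i := fun (j : Fin k) (hj : j ∈ Iio ℓ) =>
      (⟨j.val, Fin.lt_def.mp (Finset.mem_Iio.mp hj)⟩ : Fin ℓ.val))
    (j := fun (i : Fin ℓ.val) _ => Fin.castLE ℓ.isLt.le i) <;>
    intro a ha <;> try rfl
  · exact Finset.mem_univ _
  · exact Finset.mem_Iio.mpr (by simp [Fin.lt_def])

lemma geomST10 (hp : 1 ≤ p) : ∀ k : ℕ, (∑ i ∈ range k, p ^ i * (p - 1)) + 1 = p ^ k := by
  intro k
  induction k with
  | zero => simp
  | succ n ih =>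
    rw [Finset.sum_range_succ, pow_succ]
    have h1 : p ^ n * (p - 1) + p ^ n = p ^ n * p := by
      rw [← Nat.mul_succ]
      congr 1
      omega
    omega

end Aux

/-- The family 𝓕_{k-1} (constant 1 together with all mod-p expressions
α₁x₁ ⊕ ⋯ ⊕ α_ℓ x_ℓ ⊕ x_{ℓ+1} ⊕ β with β ∈ {0,…,p−2}, viewed as ℂ-valued
functions) is linearly independent and spans the space of functions (ℤ_p)^k → ℂ. -/
theorem stmt10 (p k : ℕ) [Fact p.Prime] [NeZero p] (hk : 1 ≤ k)
    (G : Set ((Fin k → ZMod p) → ℂ))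
    (hG : G = {g | g = fun _ => (1 : ℂ)} ∪
        {g | ∃ ℓ : ℕ, ∃ hℓ : ℓ < k, ∃ α : Fin ℓ → ZMod p, ∃ β : ZMod p,
          β.val < p - 1 ∧
          g = fun x =>
            ((((∑ i, α i * x (Fin.castLE hℓ.le i)) + x ⟨ℓ, hℓ⟩ + β).val : ℕ) : ℂ)}) :
    LinearIndependent ℂ (fun g : G => (g : (Fin k → ZMod p) → ℂ)) ∧
    Submodule.span ℂ G = ⊤ := by
  classical
  subst hG
  set G : Set ((Fin k → ZMod p) → ℂ) := {g | g = fun _ => (1 : ℂ)} ∪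
      {g | ∃ ℓ : ℕ, ∃ hℓ : ℓ < k, ∃ α : Fin ℓ → ZMod p, ∃ β : ZMod p,
        β.val < p - 1 ∧
        g = fun x =>
          ((((∑ i, α i * x (Fin.castLE hℓ.le i)) + x ⟨ℓ, hℓ⟩ + β).val : ℕ) : ℂ)} with hG
  have hp1 : 1 < p := (Fact.out (p := p.Prime)).one_lt
  -- Step 1: every character is in the span of G
  have chi_mem : ∀ a : Fin k → ZMod p,
      (fun x : Fin k → ZMod p => eeST10 p (∑ i, a i * x i)) ∈ Submodule.span ℂ G := by
    intro a
    by_cases ha : a = 0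
    · have h0 : (fun x : Fin k → ZMod p => eeST10 p (∑ i, a i * x i)) = fun _ => 1 := by
        funext x; simp [ha, eeST10_zero]
      rw [h0]
      exact Submodule.subset_span (Or.inl rfl)
    · obtain ⟨ℓ, hℓa, hmax⟩ : ∃ ℓ : Fin k, a ℓ ≠ 0 ∧ ∀ i, a i ≠ 0 → i ≤ ℓ := by
        have hne : (univ.filter (fun i => a i ≠ 0)).Nonempty := by
          rcases Function.ne_iff.mp ha with ⟨i, hi⟩
          exact ⟨i, Finset.mem_filter.mpr ⟨mem_univ _, hi⟩⟩
        refine ⟨(univ.filter (fun i => a i ≠ 0)).max' hne, ?_, ?_⟩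
        · exact (Finset.mem_filter.mp ((univ.filter _).max'_mem hne)).2
        · intro i hi; exact Finset.le_max' _ i (Finset.mem_filter.mpr ⟨mem_univ _, hi⟩)
      set α : Fin ℓ.val → ZMod p := fun i => a (Fin.castLE ℓ.isLt.le i) * (a ℓ)⁻¹ with hα
      set L : (Fin k → ZMod p) → ZMod p :=
        fun x => (∑ i, α i * x (Fin.castLE ℓ.isLt.le i)) + x ⟨ℓ.val, ℓ.isLt⟩ with hL
      have hkey : ∀ x, ∑ i, a i * x i = a ℓ * L x := by
        intro x
        have h1 : ∑ i, a i * x i = ∑ i ∈ Iic ℓ, a i * x i := by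
          symm; apply Finset.sum_subset (subset_univ _)
          intro i _ hi
          have hz : a i = 0 := by
            by_contra h0
            exact hi (Finset.mem_Iic.mpr (hmax i h0))
          rw [hz, zero_mul]
        rw [h1, ← Finset.Iio_insert, Finset.sum_insert (by simp), sum_Iio_finST10]
        have hterm : ∀ i : Fin ℓ.val,
            a ℓ * (α i * x (Fin.castLE ℓ.isLt.le i)) =
              a (Fin.castLE ℓ.isLt.le i) * x (Fin.castLE ℓ.isLt.le i) := by
          intro i
          rw [hα]
          have h2 : a ℓ * (a (Fin.castLE ℓ.isLt.le i) * (a ℓ)⁻¹ * x (Fin.castLE ℓ.isLt.le i)) =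
              a (Fin.castLE ℓ.isLt.le i) * (a ℓ * (a ℓ)⁻¹) * x (Fin.castLE ℓ.isLt.le i) := by
            ring
          rw [h2, mul_inv_cancel₀ hℓa, mul_one]
        rw [hL, mul_add, Finset.mul_sum, Finset.sum_congr rfl (fun i _ => hterm i)]
        exact add_comm _ _
      have hcomp : (fun x : Fin k → ZMod p => eeST10 p (∑ i, a i * x i)) =
          (LinearMap.funLeft ℂ ℂ L) (fun t => eeST10 p (a ℓ * t)) := by
        funext x
        simp only [LinearMap.funLeft_apply, Function.comp]
        rw [hkey x]
      rw [hcomp]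
      have h1 : (fun t => eeST10 p (a ℓ * t)) ∈ Submodule.span ℂ (S1ST10 p) := span_S1ST10 p _
      have h2 := Submodule.apply_mem_span_image_of_mem_span (LinearMap.funLeft ℂ ℂ L) h1
      refine Submodule.span_le.mpr ?_ h2
      rintro g ⟨f, hf, rfl⟩
      apply Submodule.subset_span
      rcases hf with hf | ⟨β, hβ, rfl⟩
      · rw [Set.mem_setOf_eq] at hf
        subst hf
        exact Or.inl rfl
      · exact Or.inr ⟨ℓ.val, ℓ.isLt, α, β, hβ, by rw [hL]; rfl⟩
  -- Step 2: scaled indicator functions are in the span of G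
  have hdelta : ∀ c : Fin k → ZMod p,
      (fun x : Fin k → ZMod p => if x = c then ((p : ℂ)) ^ k else 0) ∈ Submodule.span ℂ G := by
    intro c
    have key : (fun x : Fin k → ZMod p => if x = c then ((p : ℂ)) ^ k else 0) =
        ∑ a : Fin k → ZMod p, eeST10 p (∑ i, a i * (-(c i))) •
          (fun x : Fin k → ZMod p => eeST10 p (∑ i, a i * x i)) := by
      funext x
      rw [Finset.sum_apply]
      simp only [Pi.smul_apply, smul_eq_mul]
      have step1 : ∀ a : Fin k → ZMod p,
          eeST10 p (∑ i, a i * (-(c i))) * eeST10 p (∑ i, a i * x i)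
            = ∏ i, eeST10 p (a i * (x i - c i)) := by
        intro a
        rw [← eeST10_add, ← Finset.sum_add_distrib]
        rw [show (∑ i, (a i * (-(c i)) + a i * x i)) = ∑ i, a i * (x i - c i) from
          Finset.sum_congr rfl (fun i _ => by ring)]
        exact eeST10_sum p _ _
      rw [Finset.sum_congr rfl (fun a _ => step1 a),
        ← Fintype.prod_sum (fun (i : Fin k) (b : ZMod p) => eeST10 p (b * (x i - c i)))]
      rw [Finset.prod_congr rfl (fun i _ => sum_eeST10 p (x i - c i))]
      by_cases hx : x = c
      · subst hx
        simp [Finset.prod_const, Finset.card_univ]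
      · obtain ⟨i, hi⟩ := Function.ne_iff.mp hx
        rw [if_neg hx]
        exact (Finset.prod_eq_zero (mem_univ i)
          (show (if x i - c i = 0 then (p : ℂ) else 0) = 0 from
            if_neg (sub_ne_zero.mpr hi))).symm
    rw [key]
    exact Submodule.sum_mem _ fun a _ => Submodule.smul_mem _ _ (chi_mem a)
  -- Step 3: the span is ⊤
  have hspan : Submodule.span ℂ G = ⊤ := by
    rw [eq_top_iff]
    intro F _
    have hp0 : ((p : ℂ)) ^ k ≠ 0 := pow_ne_zero _ (Nat.cast_ne_zero.mpr (NeZero.ne p))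
    have key : F = ∑ c : Fin k → ZMod p, (F c / (p : ℂ) ^ k) •
        (fun x : Fin k → ZMod p => if x = c then ((p : ℂ)) ^ k else 0) := by
      funext x
      rw [Finset.sum_apply]
      simp only [Pi.smul_apply, smul_eq_mul, mul_ite, mul_zero]
      rw [Finset.sum_ite_eq univ x (fun c => F c / (p : ℂ) ^ k * (p : ℂ) ^ k),
        if_pos (mem_univ x), div_mul_cancel₀ _ hp0]
    rw [key]
    exact Submodule.sum_mem _ fun c _ => Submodule.smul_mem _ _ (hdelta c)
  -- Step 4: cardinality
  let T := Option ((ℓ : Fin k) × ((Fin ℓ.val → ZMod p) × Fin (p - 1)))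
  let φ : T → ((Fin k → ZMod p) → ℂ) := fun t => match t with
    | none => fun _ => 1
    | some ⟨ℓ, α, b⟩ => fun x =>
        ((((∑ i, α i * x (Fin.castLE ℓ.isLt.le i)) + x ⟨ℓ.val, ℓ.isLt⟩ +
          ((b.val : ℕ) : ZMod p)).val : ℕ) : ℂ)
  have hsub : G ⊆ Set.range φ := by
    rintro g (hg | ⟨ℓ, hℓ, α, β, hβ, rfl⟩)
    · exact ⟨none, hg.symm⟩
    · refine ⟨some ⟨⟨ℓ, hℓ⟩, α, ⟨β.val, hβ⟩⟩, ?_⟩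
      have hcast : ((β.val : ℕ) : ZMod p) = β := by
        rw [ZMod.natCast_val, ZMod.cast_id]
      simp only [φ, hcast]
  have hGfin : G.Finite := (Set.finite_range φ).subset hsub
  haveI : Fintype G := hGfin.fintype
  have cardT : Fintype.card T = p ^ k := by
    have hsummand : ∀ ℓ : Fin k,
        Fintype.card ((Fin ℓ.val → ZMod p) × Fin (p - 1)) = p ^ ℓ.val * (p - 1) := by
      intro ℓ
      rw [Fintype.card_prod, Fintype.card_fun, ZMod.card, Fintype.card_fin, Fintype.card_fin]
    show Fintype.card (Option ((ℓ : Fin k) × ((Fin ℓ.val → ZMod p) × Fin (p - 1)))) = p ^ k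
    rw [Fintype.card_option, Fintype.card_sigma,
      Finset.sum_congr rfl (fun ℓ _ => hsummand ℓ),
      Fin.sum_univ_eq_sum_range (fun i => p ^ i * (p - 1)) k, geomST10 p hp1.le k]
  have hrank : Module.finrank ℂ ((Fin k → ZMod p) → ℂ) = p ^ k := by
    rw [Module.finrank_fintype_fun_eq_card, Fintype.card_fun, ZMod.card, Fintype.card_fin]
  have hcard_le : Fintype.card G ≤ p ^ k := by
    calc Fintype.card G ≤ Fintype.card (Set.range φ) :=
          Fintype.card_le_of_injective (Set.inclusion hsub) (Set.inclusion_injective hsub)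
      _ ≤ Fintype.card T := Fintype.card_range_le φ
      _ = p ^ k := cardT
  have hge : p ^ k ≤ Fintype.card G := by
    have h1 := finrank_span_le_card (R := ℂ) G
    rw [hspan, finrank_top, hrank, Set.toFinset_card] at h1
    exact h1
  have hcard : Fintype.card G = p ^ k := le_antisymm hcard_le hge
  constructor
  · apply linearIndependent_of_top_le_span_of_card_eq_finrank
    · rw [Subtype.range_coe]
      exact hspan.ge
    · rw [hcard, hrank]
  · exact hspan
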